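/- arXiv:2305.12309 — 5 statements merged into one kernel-verified Lean document; each statement's English description precedes it below -/
import Mathlib

section
/- For any π ≥ 0, the profit function x ↦ R(x; π) = x·π − λ·E[(x − X)⁺] is nondecreasing on the interval [0, y*(π)]; in particular R(x; π) ≥ R(0; π) = 0 for all x ∈ [0, y*(π)]. If moreover π > 0 and F is strictly increasing on [0, X̄], then x ↦ R(x; π) is strictly increasing on [0, y*(π)]. -/
open MeasureTheory Set

/-- The cumulative distribution function `F(t) = P(X ≤ t)` of a random variable `X`. -/
noncomputable def cdfOf {Ω : Type*} [MeasurableSpace Ω] (μ : Measure Ω) (X : Ω → ℝ) (t : ℝ) : ℝ :=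
  (μ {ω | X ω ≤ t}).toReal

/-- The generalized inverse `F⁻¹(u) = inf {t ≥ 0 : F(t) ≥ u}`. -/
noncomputable def geninv (F : ℝ → ℝ) (u : ℝ) : ℝ :=
  sInf {t : ℝ | 0 ≤ t ∧ u ≤ F t}

/-- The optimal commitment function `y*(π) = F⁻¹(min(π/λ, 1))`. -/
noncomputable def ystar (F : ℝ → ℝ) (lam : ℝ) (pr : ℝ) : ℝ :=
  geninv F (min (pr / lam) 1)

/-- The expected profit `R(x; π) = x·π − λ·E[(x − X)⁺]` of a supplier paid day-ahead
price `π` for committed quantity `x`, with real-time penalty price `λ`. -/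
noncomputable def profit {Ω : Type*} [MeasurableSpace Ω] (μ : Measure Ω) (X : Ω → ℝ)
    (lam : ℝ) (pr : ℝ) (x : ℝ) : ℝ :=
  x * pr - lam * ∫ ω, max (x - X ω) 0 ∂μ

/-- For any `π ≥ 0`, the profit `x ↦ R(x; π)` is nondecreasing on `[0, y*(π)]`;
in particular `R(x; π) ≥ R(0; π) = 0` on that interval.  If moreover `π > 0` and `F` is
strictly increasing on `[0, X̄]`, then `x ↦ R(x; π)` is strictly increasing on `[0, y*(π)]`. -/
theorem profit_monotone_on_commitment_interval
    {Ω : Type*} [MeasurableSpace Ω] (μ : Measure Ω) [IsProbabilityMeasure μ]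
    (X : Ω → ℝ) (hX : Measurable X) (hXnn : ∀ ω, 0 ≤ X ω)
    (Xbar : ℝ) (hXbar : 0 < Xbar) (hsupp : μ {ω | X ω ≤ Xbar} = 1)
    (hFc : Continuous (cdfOf μ X)) (hF0 : cdfOf μ X 0 = 0) (hF1 : cdfOf μ X Xbar = 1)
    (lam : ℝ) (hlam : 0 < lam) (pr : ℝ) (hpr : 0 ≤ pr) :
    MonotoneOn (fun x => profit μ X lam pr x)
      (Set.Icc (0:ℝ) (ystar (cdfOf μ X) lam pr)) ∧
    profit μ X lam pr 0 = 0 ∧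
    (∀ x ∈ Set.Icc (0:ℝ) (ystar (cdfOf μ X) lam pr),
      profit μ X lam pr 0 ≤ profit μ X lam pr x) ∧
    (0 < pr → StrictMonoOn (cdfOf μ X) (Set.Icc (0:ℝ) Xbar) →
      StrictMonoOn (fun x => profit μ X lam pr x)
        (Set.Icc (0:ℝ) (ystar (cdfOf μ X) lam pr))) := by
  set F : ℝ → ℝ := cdfOf μ X with hFdef
  set u : ℝ := min (pr / lam) 1 with hudef
  set y : ℝ := ystar F lam pr with hydef
  have hμt : ∀ s : Set Ω, μ s ≠ ⊤ := fun s => measure_ne_top μ s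
  have hms : ∀ t : ℝ, MeasurableSet {ω | X ω ≤ t} := fun t => hX measurableSet_Iic
  have hFmono : Monotone F := by
    intro s t hst
    exact ENNReal.toReal_mono (hμt _) (measure_mono (fun ω h => le_trans h hst))
  have hu0 : 0 ≤ u := le_min (div_nonneg hpr hlam.le) zero_le_one
  have hu1 : u ≤ pr / lam := min_le_left _ _
  have hSne : Xbar ∈ {t : ℝ | 0 ≤ t ∧ u ≤ F t} := ⟨hXbar.le, by rw [hF1]; exact min_le_right _ _⟩
  have hSbdd : BddBelow {t : ℝ | 0 ≤ t ∧ u ≤ F t} := ⟨0, fun t ht => ht.1⟩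
  have hyeq : y = sInf {t : ℝ | 0 ≤ t ∧ u ≤ F t} := rfl
  have hy0 : 0 ≤ y := by rw [hyeq]; exact le_csInf ⟨Xbar, hSne⟩ (fun t ht => ht.1)
  have hyXbar : y ≤ Xbar := by rw [hyeq]; exact csInf_le hSbdd hSne
  have hFy : F y ≤ u := by
    by_contra h
    push_neg at h
    obtain ⟨s, hs, hFs⟩ := intermediate_value_Icc hy0 hFc.continuousOn
      (show u ∈ Icc (F 0) (F y) from ⟨by rw [hF0] at *; exact hu0, h.le⟩)
    have hsS : s ∈ {t : ℝ | 0 ≤ t ∧ u ≤ F t} := ⟨hs.1, hFs.ge⟩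
    have hys : y ≤ s := by rw [hyeq]; exact csInf_le hSbdd hsS
    have : F y ≤ F s := hFmono hys
    rw [hFs] at this
    exact absurd this (not_le.mpr h)
  have hint : ∀ x : ℝ, Integrable (fun ω => max (x - X ω) 0) μ := by
    intro x
    refine (integrable_const (max x 0)).mono'
      ((measurable_const.sub hX).max measurable_const).aestronglyMeasurable ?_
    refine Filter.Eventually.of_forall fun ω => ?_
    rw [Real.norm_eq_abs, abs_of_nonneg (le_max_right _ _)]
    exact max_le_max (by linarith [hXnn ω]) le_rfl
  have key : ∀ a b c : ℝ, a ≤ c → c ≤ b →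
      (∫ ω, max (b - X ω) 0 ∂μ) - (∫ ω, max (a - X ω) 0 ∂μ)
        ≤ (b - a) * F c + (b - c) * (F b - F c) := by
    intro a b c hac hcb
    have hs1 : MeasurableSet {ω | X ω ≤ c} := hms c
    have hs2 : MeasurableSet {ω | c < X ω ∧ X ω ≤ b} :=
      (hX measurableSet_Ioi).inter (hms b)
    set g : Ω → ℝ := fun ω => ({ω | X ω ≤ c}).indicator (fun _ => b - a) ω
      + ({ω | c < X ω ∧ X ω ≤ b}).indicator (fun _ => b - c) ω with hgdef
    have hgint : Integrable g μ :=
      ((integrable_const (b - a)).indicator hs1).add ((integrable_const (b - c)).indicator hs2)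
    have hle : ∀ ω, max (b - X ω) 0 - max (a - X ω) 0 ≤ g ω := by
      intro ω
      simp only [hgdef, Set.indicator_apply, Set.mem_setOf_eq]
      rcases le_or_gt (X ω) c with h1 | h1
      · have hn : ¬ (c < X ω ∧ X ω ≤ b) := fun h => absurd h.1 (not_lt.mpr h1)
        simp only [if_pos h1, if_neg hn]
        rcases le_or_gt (a - X ω) 0 with h2 | h2
        · rw [max_eq_right h2]
          have : max (b - X ω) 0 ≤ b - a := by
            apply max_le <;> linarith
          linarith
        · rw [max_eq_left h2.le]
          have : max (b - X ω) 0 = b - X ω := max_eq_left (by linarith)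
          linarith
      · rcases le_or_gt (X ω) b with h2 | h2
        · have hc12 : c < X ω ∧ X ω ≤ b := ⟨h1, h2⟩
          simp only [if_neg (not_le.mpr h1), if_pos hc12]
          have ha0 : max (a - X ω) 0 = 0 := max_eq_right (by linarith)
          have hb0 : max (b - X ω) 0 = b - X ω := max_eq_left (by linarith)
          linarith
        · have hn : ¬ (c < X ω ∧ X ω ≤ b) := fun h => absurd h.2 (not_le.mpr h2)
          simp only [if_neg (not_le.mpr h1), if_neg hn]
          have ha0 : max (a - X ω) 0 = 0 := max_eq_right (by linarith)
          have hb0 : max (b - X ω) 0 = 0 := max_eq_right (by linarith)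
          linarith
    have hintg : (∫ ω, g ω ∂μ) = (b - a) * F c + (b - c) * (F b - F c) := by
      rw [hgdef]
      rw [integral_add ((integrable_const (b - a)).indicator hs1)
        ((integrable_const (b - c)).indicator hs2)]
      rw [integral_indicator_const _ hs1, integral_indicator_const _ hs2]
      have hset : {ω | c < X ω ∧ X ω ≤ b} = {ω | X ω ≤ b} \ {ω | X ω ≤ c} := by
        ext ω; simp only [Set.mem_setOf_eq, Set.mem_diff, not_le]; tauto
      have hsub : {ω | X ω ≤ c} ⊆ {ω | X ω ≤ b} := fun ω h => le_trans h hcb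
      have hmeas : μ {ω | c < X ω ∧ X ω ≤ b} = μ {ω | X ω ≤ b} - μ {ω | X ω ≤ c} := by
        rw [hset, measure_diff hsub (hms c).nullMeasurableSet (hμt _)]
      simp only [Measure.real]
      rw [hmeas, ENNReal.toReal_sub_of_le (measure_mono hsub) (hμt _)]
      simp only [smul_eq_mul, hFdef, cdfOf]
      ring
    calc (∫ ω, max (b - X ω) 0 ∂μ) - (∫ ω, max (a - X ω) 0 ∂μ)
        = ∫ ω, (max (b - X ω) 0 - max (a - X ω) 0) ∂μ := (integral_sub (hint b) (hint a)).symm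
      _ ≤ ∫ ω, g ω ∂μ := integral_mono ((hint b).sub (hint a)) hgint hle
      _ = _ := hintg
  have hP0 : profit μ X lam pr 0 = 0 := by
    have h0 : (fun ω => max ((0:ℝ) - X ω) 0) = fun _ => (0:ℝ) := by
      funext ω; exact max_eq_right (by linarith [hXnn ω])
    simp only [profit]
    rw [h0]
    simp
  have hmonoP : MonotoneOn (fun x => profit μ X lam pr x) (Set.Icc (0:ℝ) y) := by
    intro a ha b hb hab
    have hFb : F b ≤ pr / lam := le_trans (hFmono hb.2) (le_trans hFy hu1)
    have hFbl : lam * F b ≤ pr := by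
      rw [le_div_iff₀ hlam] at hFb; linarith
    have hk := key a b b hab le_rfl
    have hFnnb : 0 ≤ F b := ENNReal.toReal_nonneg
    simp only [profit]
    nlinarith [hk, ha.1, hb.1]
  refine ⟨hmonoP, hP0, ?_, ?_⟩
  · intro x hx
    rw [hP0]
    have h0mem : (0:ℝ) ∈ Set.Icc (0:ℝ) y := ⟨le_refl 0, le_trans hx.1 hx.2⟩
    have := hmonoP h0mem hx hx.1
    simpa [hP0] using this
  · intro hpr' hFstrict a ha b hb hab
    set c : ℝ := (a + b) / 2 with hcdef
    have hac : a ≤ c := by rw [hcdef]; linarith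
    have hcb : c ≤ b := by rw [hcdef]; linarith
    have hcb' : c < b := by rw [hcdef]; linarith
    have hbXbar : b ≤ Xbar := le_trans hb.2 hyXbar
    have hFcb : F c < F b := hFstrict ⟨le_trans ha.1 hac, le_trans hcb hbXbar⟩
      ⟨le_trans ha.1 hab.le, hbXbar⟩ hcb'
    have hFb : F b ≤ pr / lam := le_trans (hFmono hb.2) (le_trans hFy hu1)
    have hFbl : lam * F b ≤ pr := by
      rw [le_div_iff₀ hlam] at hFb; linarith
    have hFcl : lam * F c < pr := by nlinarith
    have hk := key a b c hac hcb
    simp only [profit]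
    have hbc : b - c = (b - a) / 2 := by rw [hcdef]; ring
    nlinarith [hk, hab]
end

section
/- (Proposition 1, existence) Under uniform pricing with zero price bids, assume ∑ᵢ yᵢ*(p̄) > D. Then any quantity profile q* with ∑ᵢ qᵢ* = D and 0 ≤ qᵢ* ≤ yᵢ*(p̄) for all i is a pure Nash equilibrium, and its clearing price is p̄: for every supplier i, every unilateral deviation qᵢ' ≥ 0, and every allocation consistent with the mechanism after the deviation, supplier i's payoff does not exceed its equilibrium payoff Rᵢ(qᵢ*; p̄). -/
open MeasureTheory Set

lemma cdf_mono {Ω : Type*} [MeasurableSpace Ω] (μ : Measure Ω) [IsProbabilityMeasure μ]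
    (X : Ω → ℝ) : Monotone (cdfOf μ X) := by
  intro a b hab
  unfold cdfOf
  exact ENNReal.toReal_mono (measure_ne_top μ _)
    (measure_mono (fun ω hω => le_trans hω hab))

lemma integrable_pos_part {Ω : Type*} [MeasurableSpace Ω] (μ : Measure Ω) [IsProbabilityMeasure μ]
    (X : Ω → ℝ) (hX : Measurable X) (hXnn : ∀ ω, 0 ≤ X ω) (x : ℝ) :
    Integrable (fun ω => max (x - X ω) 0) μ := by
  refine (integrable_const (max x 0)).mono' ?_ ?_
  · exact ((measurable_const.sub hX).max measurable_const).aestronglyMeasurable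
  · filter_upwards with ω
    rw [Real.norm_eq_abs, abs_of_nonneg (le_max_right _ _)]
    exact max_le_max (by linarith [hXnn ω]) le_rfl

/-- key monotonicity: if `λ F(b) ≤ p` then the profit at price `p` is increasing up to `b`. -/
lemma profit_mono {Ω : Type*} [MeasurableSpace Ω] (μ : Measure Ω) [IsProbabilityMeasure μ]
    (X : Ω → ℝ) (hX : Measurable X) (hXnn : ∀ ω, 0 ≤ X ω)
    (lam pr : ℝ) (hlam : 0 ≤ lam) (a b : ℝ) (hab : a ≤ b)
    (hFb : lam * cdfOf μ X b ≤ pr) :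
    profit μ X lam pr a ≤ profit μ X lam pr b := by
  unfold profit
  have hia := integrable_pos_part μ X hX hXnn a
  have hib := integrable_pos_part μ X hX hXnn b
  have hs : MeasurableSet {ω | X ω ≤ b} := measurableSet_le hX measurable_const
  have hbound : ∀ ω, max (b - X ω) 0 - max (a - X ω) 0
      ≤ Set.indicator {ω | X ω ≤ b} (fun _ => b - a) ω := by
    intro ω
    by_cases h : X ω ≤ b
    · rw [Set.indicator_of_mem (show ω ∈ {ω | X ω ≤ b} from h)]
      rcases le_or_gt (a - X ω) 0 with h' | h'
      · rw [max_eq_right h']; simp only [sub_zero]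
        exact max_le (by linarith) (by linarith)
      · rw [max_eq_left h'.le, max_eq_left (by linarith)]; linarith
    · push_neg at h
      rw [Set.indicator_of_notMem (by simpa using h.not_ge)]
      rw [max_eq_right (by linarith : a - X ω ≤ (0:ℝ)), max_eq_right (by linarith : b - X ω ≤ (0:ℝ))]
      simp
  have hint : ∫ ω, max (b - X ω) 0 ∂μ - ∫ ω, max (a - X ω) 0 ∂μ
      ≤ (b - a) * cdfOf μ X b := by
    rw [← integral_sub hib hia]
    calc ∫ ω, (max (b - X ω) 0 - max (a - X ω) 0) ∂μ
        ≤ ∫ ω, Set.indicator {ω | X ω ≤ b} (fun _ => b - a) ω ∂μ := by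
          refine integral_mono (hib.sub hia) ?_ hbound
          exact (integrable_const (b - a)).indicator hs
      _ = (b - a) * cdfOf μ X b := by
          rw [integral_indicator_const _ hs, cdfOf, smul_eq_mul, mul_comm]; rfl
  nlinarith [mul_le_mul_of_nonneg_left hint hlam,
    mul_le_mul_of_nonneg_left hFb (sub_nonneg.mpr hab)]

lemma cdf_le_of_le_geninv {Ω : Type*} [MeasurableSpace Ω] (μ : Measure Ω) [IsProbabilityMeasure μ]
    (X : Ω → ℝ) (hFc : Continuous (cdfOf μ X)) (hF0 : cdfOf μ X 0 = 0)
    (u : ℝ) (hu : 0 < u) (T : ℝ) (hT : 0 ≤ T) (hTu : u ≤ cdfOf μ X T)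
    (b : ℝ) (hb : b ≤ geninv (cdfOf μ X) u) :
    cdfOf μ X b ≤ u := by
  set F := cdfOf μ X
  set S : Set ℝ := {t : ℝ | 0 ≤ t ∧ u ≤ F t}
  have hbdd : BddBelow S := ⟨0, fun t ht => ht.1⟩
  by_contra hlt
  push_neg at hlt
  rcases le_or_gt b 0 with hb0 | hb0
  · have : F b ≤ 0 := hF0 ▸ cdf_mono μ X hb0
    linarith
  · have hcont : ContinuousAt F b := hFc.continuousAt
    rw [Metric.continuousAt_iff] at hcont
    obtain ⟨δ, hδ, hδ'⟩ := hcont (F b - u) (by linarith)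
    set c := max 0 (b - δ/2) with hc
    have hcb : c < b := max_lt hb0 (by linarith)
    have hcS : c ∈ S := by
      refine ⟨le_max_left _ _, ?_⟩
      have hdist : dist c b < δ := by
        rw [Real.dist_eq, abs_of_nonpos (by linarith)]
        have : b - δ/2 ≤ c := le_max_right _ _
        linarith
      have h2 := hδ' hdist
      rw [Real.dist_eq] at h2
      have h3 := abs_lt.mp h2
      linarith [h3.1]
    have : geninv F u ≤ c := csInf_le hbdd hcS
    linarith

/-- Proposition 1 (existence): under uniform pricing with zero price bids, if
`∑ᵢ yᵢ*(p̄) > D`, then any quantity profile `q*` with `∑ᵢ qᵢ* = D` and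
`0 ≤ qᵢ* ≤ yᵢ*(p̄)` is a pure Nash equilibrium with clearing price `p̄`: no unilateral
deviation (under any allocation consistent with the mechanism) yields a payoff above the
equilibrium payoff `Rᵢ(qᵢ*; p̄)`. -/
theorem up_zero_bid_equilibrium_existence
    {Ω : Type*} [MeasurableSpace Ω] (μ : Measure Ω) [IsProbabilityMeasure μ]
    (I : ℕ) (hI : 2 ≤ I)
    (X : Fin I → Ω → ℝ) (hX : ∀ i, Measurable (X i)) (hXnn : ∀ i ω, 0 ≤ X i ω)
    (Xbar : Fin I → ℝ) (hXbar : ∀ i, 0 < Xbar i)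
    (hsupp : ∀ i, μ {ω | X i ω ≤ Xbar i} = 1)
    (hFc : ∀ i, Continuous (cdfOf μ (X i)))
    (hF0 : ∀ i, cdfOf μ (X i) 0 = 0) (hF1 : ∀ i, cdfOf μ (X i) (Xbar i) = 1)
    (lam : ℝ) (hlam : 0 < lam) (pbar : ℝ) (hpbar : 0 < pbar)
    (D : ℝ) (hD : 0 < D)
    (hadeq : D < ∑ i, ystar (cdfOf μ (X i)) lam pbar)
    (q : Fin I → ℝ) (hqsum : ∑ i, q i = D)
    (hq : ∀ i, 0 ≤ q i ∧ q i ≤ ystar (cdfOf μ (X i)) lam pbar) :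
    -- at the profile `q`, the market clears at the price cap `p̄`
    ((if (∑ i, q i) ≤ D then pbar else 0) = pbar) ∧
    -- no unilateral deviation is profitable
    ∀ i : Fin I, ∀ qi' : ℝ, 0 ≤ qi' →
      (((∑ k, Function.update q i qi' k) ≤ D →
          profit μ (X i) lam pbar qi' ≤ profit μ (X i) lam pbar (q i)) ∧
       (D < (∑ k, Function.update q i qi' k) →
          ∀ x : Fin I → ℝ,
            (∀ k, 0 ≤ x k ∧ x k ≤ Function.update q i qi' k) → (∑ k, x k) = D →
            profit μ (X i) lam 0 (x i) ≤ profit μ (X i) lam pbar (q i))) := by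
  have hu : 0 < min (pbar / lam) 1 := lt_min (div_pos hpbar hlam) one_pos
  -- key fact: λ F_i(q i) ≤ p̄
  have hFq : ∀ i, lam * cdfOf μ (X i) (q i) ≤ pbar := by
    intro i
    have h1 : cdfOf μ (X i) (q i) ≤ min (pbar / lam) 1 := by
      refine cdf_le_of_le_geninv μ (X i) (hFc i) (hF0 i) _ hu (Xbar i) (hXbar i).le ?_ _ (hq i).2
      rw [hF1 i]; exact min_le_right _ _
    calc lam * cdfOf μ (X i) (q i) ≤ lam * (pbar / lam) := by
          refine mul_le_mul_of_nonneg_left (h1.trans (min_le_left _ _)) hlam.le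
      _ = pbar := by field_simp
  refine ⟨by rw [hqsum]; simp, ?_⟩
  intro i qi' hqi'
  -- decompose the sums
  have hupd : ∑ k, Function.update q i qi' k = qi' + ∑ k ∈ Finset.univ.erase i, q k := by
    rw [Finset.sum_update_of_mem (Finset.mem_univ i), Finset.sdiff_singleton_eq_erase]
  have hqi : q i + ∑ k ∈ Finset.univ.erase i, q k = D := by
    rw [Finset.add_sum_erase _ _ (Finset.mem_univ i), hqsum]
  constructor
  · intro hle
    have hqi'le : qi' ≤ q i := by rw [hupd] at hle; linarith
    exact profit_mono μ (X i) (hX i) (hXnn i) lam pbar hlam.le qi' (q i) hqi'le (hFq i)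
  · intro _ x hx _
    have h1 : profit μ (X i) lam 0 (x i) ≤ 0 := by
      unfold profit
      have : 0 ≤ ∫ ω, max (x i - X i ω) 0 ∂μ :=
        integral_nonneg (fun ω => le_max_right _ _)
      nlinarith
    have h2 : profit μ (X i) lam pbar 0 = 0 := by
      unfold profit
      have : (fun ω => max ((0:ℝ) - X i ω) 0) = fun _ => (0:ℝ) := by
        funext ω; rw [max_eq_right (by linarith [hXnn i ω])]
      rw [this, integral_const]; simp
    have h3 := profit_mono μ (X i) (hX i) (hXnn i) lam pbar hlam.le 0 (q i) (hq i).1 (hFq i)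
    linarith
end

section
/- (Proposition 1, necessity) Under uniform pricing with zero price bids, assume each F_i is strictly increasing on [0, X̄_i] and ∑ᵢ yᵢ*(p̄) > D, and fix any allocation rule q ↦ x(q) satisfying 0 ≤ x_i(q) ≤ q_i and ∑_i x_i(q) = D whenever ∑_i q_i > D. Then every pure Nash equilibrium q* satisfies ∑ᵢ qᵢ* = D, and consequently the clearing price at every pure Nash equilibrium equals the price cap p̄. -/
open MeasureTheory Set

/-- Payoff of supplier `i` in the uniform-pricing game with zero price bids: if the total
bid quantity does not exceed demand the price is `p̄` and `i` is committed to its bid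
`q i`; otherwise the price is `0` and the commitments come from the allocation rule. -/
noncomputable def upPayoff {Ω : Type*} [MeasurableSpace Ω] (μ : Measure Ω) {I : ℕ}
    (X : Fin I → Ω → ℝ) (lam pbar D : ℝ) (alloc : (Fin I → ℝ) → Fin I → ℝ)
    (i : Fin I) (q : Fin I → ℝ) : ℝ :=
  if (∑ k, q k) ≤ D then profit μ (X i) lam pbar (q i)
  else profit μ (X i) lam 0 (alloc q i)

section Aux

variable {Ω : Type*} [MeasurableSpace Ω]

lemma integrable_maxsub (μ : Measure Ω) [IsProbabilityMeasure μ]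
    {X : Ω → ℝ} (hX : Measurable X) (hXnn : ∀ ω, 0 ≤ X ω) (x : ℝ) :
    Integrable (fun ω => max (x - X ω) 0) μ := by
  refine Integrable.mono' (integrable_const |x|)
    ((measurable_const.sub hX).max measurable_const).aestronglyMeasurable ?_
  filter_upwards with ω
  rw [Real.norm_of_nonneg (le_max_right _ _)]
  rcases le_total (x - X ω) 0 with h | h
  · rw [max_eq_right h]; exact abs_nonneg x
  · rw [max_eq_left h]
    calc x - X ω ≤ x := by linarith [hXnn ω]
      _ ≤ |x| := le_abs_self x

lemma profit_zero_commit (μ : Measure Ω) [IsProbabilityMeasure μ]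
    {X : Ω → ℝ} (hXnn : ∀ ω, 0 ≤ X ω) (lam pr : ℝ) :
    profit μ X lam pr 0 = 0 := by
  have h : (fun ω => max (0 - X ω) 0) = fun _ => (0 : ℝ) :=
    funext fun ω => max_eq_right (by linarith [hXnn ω])
  unfold profit
  rw [h, integral_zero]
  ring

lemma integral_maxsub_pos (μ : Measure Ω) [IsProbabilityMeasure μ]
    {X : Ω → ℝ} (hX : Measurable X) (hXnn : ∀ ω, 0 ≤ X ω)
    {Xb : ℝ} (hXb : 0 < Xb)
    (hF0 : cdfOf μ X 0 = 0) (hF1 : cdfOf μ X Xb = 1)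
    (hFs : StrictMonoOn (cdfOf μ X) (Set.Icc (0:ℝ) Xb))
    {x : ℝ} (hx : 0 < x) :
    0 < ∫ ω, max (x - X ω) 0 ∂μ := by
  set c := min (x / 2) Xb with hc
  have hc0 : 0 < c := lt_min (by linarith) hXb
  have hcx : c ≤ x / 2 := min_le_left _ _
  have hFcpos : 0 < cdfOf μ X c := by
    rcases le_total (x / 2) Xb with h | h
    · have hceq : c = x / 2 := min_eq_left h
      have : cdfOf μ X 0 < cdfOf μ X c :=
        hFs ⟨le_refl 0, hXb.le⟩ ⟨hc0.le, by rw [hceq]; exact h⟩ hc0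
      linarith [hF0 ▸ this]
    · have hceq : c = Xb := min_eq_right h
      rw [hceq, hF1]; norm_num
  set A := {ω | X ω ≤ c} with hA
  have hAm : MeasurableSet A := hX measurableSet_Iic
  have hint := integrable_maxsub μ hX hXnn x
  have h1 : ∫ ω in A, max (x - X ω) 0 ∂μ ≤ ∫ ω, max (x - X ω) 0 ∂μ :=
    setIntegral_le_integral hint (Filter.Eventually.of_forall fun ω => le_max_right _ _)
  have h2 : (x / 2) * (μ A).toReal ≤ ∫ ω in A, max (x - X ω) 0 ∂μ := by
    refine setIntegral_ge_of_const_le_real hAm (measure_ne_top μ A) ?_ hint.integrableOn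
    intro ω hω
    have hωc : X ω ≤ c := hω
    have : x / 2 ≤ x - X ω := by linarith
    exact this.trans (le_max_left _ _)
  have hApos : 0 < (μ A).toReal := by simpa [cdfOf, hA] using hFcpos
  nlinarith

lemma integral_maxsub_diff_le (μ : Measure Ω) [IsProbabilityMeasure μ]
    {X : Ω → ℝ} (hX : Measurable X) (hXnn : ∀ ω, 0 ≤ X ω)
    (x ε : ℝ) (hε : 0 ≤ ε) :
    ∫ ω, max (x + ε - X ω) 0 ∂μ - ∫ ω, max (x - X ω) 0 ∂μ
      ≤ ε * cdfOf μ X (x + ε) := by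
  have h1 := integrable_maxsub μ hX hXnn (x + ε)
  have h2 := integrable_maxsub μ hX hXnn x
  set A := {ω | X ω ≤ x + ε} with hA
  have hAm : MeasurableSet A := hX measurableSet_Iic
  rw [← integral_sub h1 h2]
  have hmono : ∀ ω, max (x + ε - X ω) 0 - max (x - X ω) 0
      ≤ A.indicator (fun _ => ε) ω := by
    intro ω
    by_cases hω : ω ∈ A
    · rw [Set.indicator_of_mem hω]
      have hle : max (x + ε - X ω) 0 ≤ max (x - X ω) 0 + ε := by
        refine max_le (by linarith [le_max_left (x - X ω) 0]) ?_
        exact add_nonneg (le_max_right _ _) hε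
      linarith
    · rw [Set.indicator_of_notMem hω]
      have hω' : x + ε < X ω := not_le.mp hω
      rw [max_eq_right (by linarith), max_eq_right (by linarith)]
      simp
  calc ∫ ω, (max (x + ε - X ω) 0 - max (x - X ω) 0) ∂μ
      ≤ ∫ ω, A.indicator (fun _ => ε) ω ∂μ :=
        integral_mono (h1.sub h2) ((integrable_const ε).indicator hAm) hmono
    _ = (μ A).toReal • ε := integral_indicator_const ε hAm
    _ = ε * cdfOf μ X (x + ε) := by rw [smul_eq_mul, cdfOf]; ring

end Aux

/-- Proposition 1 (necessity): under uniform pricing with zero price bids, if each `Fᵢ` is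
strictly increasing on `[0, X̄ᵢ]` and `∑ᵢ yᵢ*(p̄) > D`, then every pure Nash equilibrium `q*`
satisfies `∑ᵢ qᵢ* = D`, and consequently the clearing price equals the price cap `p̄`. -/
theorem up_zero_bid_equilibrium_necessity
    {Ω : Type*} [MeasurableSpace Ω] (μ : Measure Ω) [IsProbabilityMeasure μ]
    (I : ℕ) (hI : 2 ≤ I)
    (X : Fin I → Ω → ℝ) (hX : ∀ i, Measurable (X i)) (hXnn : ∀ i ω, 0 ≤ X i ω)
    (Xbar : Fin I → ℝ) (hXbar : ∀ i, 0 < Xbar i)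
    (hsupp : ∀ i, μ {ω | X i ω ≤ Xbar i} = 1)
    (hFc : ∀ i, Continuous (cdfOf μ (X i)))
    (hF0 : ∀ i, cdfOf μ (X i) 0 = 0) (hF1 : ∀ i, cdfOf μ (X i) (Xbar i) = 1)
    (hFstrict : ∀ i, StrictMonoOn (cdfOf μ (X i)) (Set.Icc (0:ℝ) (Xbar i)))
    (lam : ℝ) (hlam : 0 < lam) (pbar : ℝ) (hpbar : 0 < pbar)
    (D : ℝ) (hD : 0 < D)
    (hadeq : D < ∑ i, ystar (cdfOf μ (X i)) lam pbar)
    -- a fixed allocation rule, consistent with the mechanism when total bids exceed demand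
    (alloc : (Fin I → ℝ) → Fin I → ℝ)
    (halloc : ∀ q : Fin I → ℝ, (∀ i, 0 ≤ q i) → D < (∑ i, q i) →
      (∀ i, 0 ≤ alloc q i ∧ alloc q i ≤ q i) ∧ (∑ i, alloc q i) = D)
    -- a pure Nash equilibrium `q`
    (q : Fin I → ℝ) (hqnn : ∀ i, 0 ≤ q i)
    (hNE : ∀ i : Fin I, ∀ qi' : ℝ, 0 ≤ qi' →
      upPayoff μ X lam pbar D alloc i (Function.update q i qi')
        ≤ upPayoff μ X lam pbar D alloc i q) :
    (∑ i, q i) = D ∧ (if (∑ i, q i) ≤ D then pbar else 0) = pbar := by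
  have key : (∑ i, q i) = D := by
    rcases lt_trichotomy (∑ i, q i) D with hlt | heq | hgt
    · -- case ∑ q < D : some supplier can profitably increase its bid
      exfalso
      obtain ⟨i, -, hi⟩ : ∃ i ∈ Finset.univ, q i < ystar (cdfOf μ (X i)) lam pbar :=
        Finset.exists_lt_of_sum_lt (by linarith)
      set yi := ystar (cdfOf μ (X i)) lam pbar with hyi
      set ε := min (D - ∑ k, q k) ((yi - q i) / 2) with hεdef
      have hε0 : 0 < ε := lt_min (by linarith) (by linarith)
      have hεD : ∑ k, q k + ε ≤ D := by
        have := min_le_left (D - ∑ k, q k) ((yi - q i) / 2); linarith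
      have hεy : q i + ε < yi := by
        have := min_le_right (D - ∑ k, q k) ((yi - q i) / 2); linarith
      -- F_i(q i + ε) < pbar / lam
      have hFlt : lam * cdfOf μ (X i) (q i + ε) < pbar := by
        set u := min (pbar / lam) 1 with hu
        have hnotin : ¬ (0 ≤ q i + ε ∧ u ≤ cdfOf μ (X i) (q i + ε)) := by
          intro hmem
          have hble : BddBelow {t : ℝ | 0 ≤ t ∧ u ≤ cdfOf μ (X i) t} :=
            ⟨0, fun t ht => ht.1⟩
          have : yi ≤ q i + ε := csInf_le hble hmem
          linarith
        have h2 : cdfOf μ (X i) (q i + ε) < u := by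
          by_contra hcon
          exact hnotin ⟨add_nonneg (hqnn i) hε0.le, not_lt.mp hcon⟩
        have h3 : cdfOf μ (X i) (q i + ε) < pbar / lam :=
          lt_of_lt_of_le h2 (min_le_left _ _)
        calc lam * cdfOf μ (X i) (q i + ε) < lam * (pbar / lam) :=
              mul_lt_mul_of_pos_left h3 hlam
          _ = pbar := by field_simp
      -- the deviation
      set q' := Function.update q i (q i + ε) with hq'
      have hsum' : ∑ k, q' k = ∑ k, q k + ε := by
        rw [hq', Finset.sum_update_of_mem (Finset.mem_univ i),
          ← Finset.sum_erase_add _ _ (Finset.mem_univ i)]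
        simp [Finset.sum_sdiff_eq_sub, add_comm]
        ring
      have hpay' : upPayoff μ X lam pbar D alloc i q' =
          profit μ (X i) lam pbar (q i + ε) := by
        rw [upPayoff, if_pos (by rw [hsum']; exact hεD)]
        congr 1
        simp [hq']
      have hpay : upPayoff μ X lam pbar D alloc i q =
          profit μ (X i) lam pbar (q i) := by
        rw [upPayoff, if_pos hlt.le]
      have hNEi := hNE i (q i + ε) (add_nonneg (hqnn i) hε0.le)
      rw [← hq', hpay', hpay] at hNEi
      have hgain := integral_maxsub_diff_le μ (hX i) (hXnn i) (q i) ε hε0.le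
      have hstrict : profit μ (X i) lam pbar (q i) < profit μ (X i) lam pbar (q i + ε) := by
        unfold profit
        have hmul : lam * (∫ ω, max (q i + ε - X i ω) 0 ∂μ - ∫ ω, max (q i - X i ω) 0 ∂μ)
            ≤ lam * (ε * cdfOf μ (X i) (q i + ε)) :=
          mul_le_mul_of_nonneg_left hgain hlam.le
        have hmul2 : ε * (lam * cdfOf μ (X i) (q i + ε)) < ε * pbar :=
          mul_lt_mul_of_pos_left hFlt hε0
        nlinarith
      linarith
    · exact heq
    · -- case ∑ q > D : clearing price 0, everyone weakly prefers bidding 0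
      exfalso
      have halc := halloc q hqnn hgt
      have hzero : ∀ i, ∫ ω, max (alloc q i - X i ω) 0 ∂μ = 0 := by
        intro i
        set q' := Function.update q i 0 with hq'
        have hq'nn : ∀ k, 0 ≤ q' k := by
          intro k
          rcases eq_or_ne k i with rfl | h
          · simp [hq']
          · simp [hq', Function.update_of_ne h]; exact hqnn k
        have hq'i : q' i = 0 := by simp [hq']
        have hdev : upPayoff μ X lam pbar D alloc i q' = 0 := by
          rw [upPayoff]
          split_ifs with h
          · rw [hq'i, profit_zero_commit μ (hXnn i)]
          · obtain ⟨hb, -⟩ := halloc q' hq'nn (not_le.mp h)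
            have h0 : alloc q' i = 0 := le_antisymm (hq'i ▸ (hb i).2) (hb i).1
            rw [h0, profit_zero_commit μ (hXnn i)]
        have hNEi := hNE i 0 le_rfl
        rw [← hq', hdev] at hNEi
        have heq2 : upPayoff μ X lam pbar D alloc i q =
            - (lam * ∫ ω, max (alloc q i - X i ω) 0 ∂μ) := by
          rw [upPayoff, if_neg (not_le.mpr hgt), profit]; ring
        rw [heq2] at hNEi
        have hnn : 0 ≤ ∫ ω, max (alloc q i - X i ω) 0 ∂μ :=
          integral_nonneg fun ω => le_max_right _ _
        nlinarith
      obtain ⟨j, hj⟩ : ∃ j, 0 < alloc q j := by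
        by_contra h
        push_neg at h
        have : ∑ j, alloc q j ≤ 0 := Finset.sum_nonpos fun j _ => h j
        rw [halc.2] at this; linarith
      have hpos := integral_maxsub_pos μ (hX j) (hXnn j) (hXbar j)
        (hF0 j) (hF1 j) (hFstrict j) hj
      rw [hzero j] at hpos
      exact lt_irrefl 0 hpos
  exact ⟨key, by rw [if_pos key.le]⟩
end

section
/- (RUP profit identity) Suppose F is continuous on ℝ with F(0) = 0. For any price π with 0 < π ≤ λ, the expected profit of a supplier paid π for the commitment y*(π) satisfies π·y*(π) − λ·E[(y*(π) − X)⁺] = λ·E[X·1{X ≤ y*(π)}]. -/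
open MeasureTheory Set

/-- RUP profit identity: for any price `π` with `0 < π ≤ λ`, the expected profit of a
supplier paid `π` for the commitment `y*(π)` satisfies
`π·y*(π) − λ·E[(y*(π) − X)⁺] = λ·E[X·1{X ≤ y*(π)}]`. -/
theorem rup_profit_identity
    {Ω : Type*} [MeasurableSpace Ω] (μ : Measure Ω) [IsProbabilityMeasure μ]
    (X : Ω → ℝ) (hX : Measurable X) (hXnn : ∀ ω, 0 ≤ X ω)
    (Xbar : ℝ) (hXbar : 0 < Xbar) (hsupp : μ {ω | X ω ≤ Xbar} = 1)
    (hFc : Continuous (cdfOf μ X)) (hF0 : cdfOf μ X 0 = 0) (hF1 : cdfOf μ X Xbar = 1)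
    (lam : ℝ) (hlam : 0 < lam) (pr : ℝ) (hpr0 : 0 < pr) (hprl : pr ≤ lam) :
    pr * ystar (cdfOf μ X) lam pr
        - lam * ∫ ω, max (ystar (cdfOf μ X) lam pr - X ω) 0 ∂μ
      = lam * ∫ ω in {ω | X ω ≤ ystar (cdfOf μ X) lam pr}, X ω ∂μ := by

  classical
  set F := cdfOf μ X with hFdef
  set u : ℝ := min (pr / lam) 1 with hudef
  have hul : u = pr / lam := min_eq_left (by rw [div_le_one hlam]; exact hprl)
  have hupos : 0 < u := by rw [hul]; positivity
  set y : ℝ := ystar F lam pr with hydef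
  have hy' : y = sInf {t : ℝ | 0 ≤ t ∧ u ≤ F t} := rfl
  have hSne : Set.Nonempty {t : ℝ | 0 ≤ t ∧ u ≤ F t} :=
    ⟨Xbar, hXbar.le, by rw [hF1]; exact min_le_right _ _⟩
  have hSbdd : BddBelow {t : ℝ | 0 ≤ t ∧ u ≤ F t} := ⟨0, fun t ht => ht.1⟩
  have hSclosed : IsClosed {t : ℝ | 0 ≤ t ∧ u ≤ F t} := by
    have : {t : ℝ | 0 ≤ t ∧ u ≤ F t} = {t : ℝ | 0 ≤ t} ∩ {t : ℝ | u ≤ F t} := by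
      ext t; simp [Set.mem_setOf_eq, Set.mem_inter_iff]
    rw [this]
    exact (isClosed_le continuous_const continuous_id).inter
      (isClosed_le continuous_const hFc)
  have hyS : y ∈ {t : ℝ | 0 ≤ t ∧ u ≤ F t} := by
    rw [hy']; exact hSclosed.csInf_mem hSne hSbdd
  have hy0 : 0 ≤ y := hyS.1
  have hFmono : Monotone F := by
    intro a b hab
    exact ENNReal.toReal_mono (measure_ne_top μ _)
      (measure_mono (fun ω (h : X ω ≤ a) => h.trans hab))
  have hFy_le : F y ≤ u := by
    by_contra h
    push_neg at h
    have hivt := intermediate_value_Icc hy0 hFc.continuousOn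
    have humem : u ∈ Set.Icc (F 0) (F y) := ⟨by rw [hF0]; exact hupos.le, h.le⟩
    obtain ⟨t, ht, hFt⟩ := hivt humem
    have hty : y ≤ t := by
      rw [hy']; exact csInf_le hSbdd ⟨ht.1, hFt.ge⟩
    have := hFmono hty
    rw [hFt] at this
    exact absurd (h.trans_le this) (lt_irrefl u)
  have hFy : F y = u := le_antisymm hFy_le hyS.2
  -- integrability of X
  have hXint : Integrable X μ := by
    refine (integrable_const Xbar).mono' hX.aestronglyMeasurable ?_
    have h0 : μ ({ω | X ω ≤ Xbar}ᶜ) = 0 :=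
      (prob_compl_eq_zero_iff (hX measurableSet_Iic)).mpr hsupp
    have hae : ∀ᵐ ω ∂μ, X ω ≤ Xbar := by
      rw [ae_iff]; simpa [Set.compl_setOf] using h0
    filter_upwards [hae] with ω hω
    rw [Real.norm_eq_abs, abs_of_nonneg (hXnn ω)]
    exact hω
  set A := {ω | X ω ≤ y} with hAdef
  have hAmeas : MeasurableSet A := hX measurableSet_Iic
  have hmuA : (μ A).toReal = pr / lam := by
    have : F y = (μ A).toReal := rfl
    rw [← this, hFy, hul]
  -- rewrite the max integral as a set integral
  have hptwise : ∀ ω, max (y - X ω) 0 = A.indicator (fun ω => y - X ω) ω := by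
    intro ω
    by_cases h : ω ∈ A
    · have hx : X ω ≤ y := h
      rw [Set.indicator_of_mem h, max_eq_left (by linarith)]
    · have hx : y < X ω := by
        by_contra hc; push_neg at hc; exact h hc
      rw [Set.indicator_of_notMem h, max_eq_right (by linarith)]
  have hint1 : ∫ ω, max (y - X ω) 0 ∂μ = ∫ ω in A, (y - X ω) ∂μ := by
    rw [show (fun ω => max (y - X ω) 0) = A.indicator (fun ω => y - X ω) from
      funext hptwise] at *
    · exact integral_indicator hAmeas
  have hint2 : ∫ ω in A, (y - X ω) ∂μ
      = (pr / lam) * y - ∫ ω in A, X ω ∂μ := by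
    rw [integral_sub (integrableOn_const (C := y) (measure_ne_top μ A))
      hXint.integrableOn]
    rw [setIntegral_const, smul_eq_mul, Measure.real, hmuA]
  have hgoal : pr * y - lam * ∫ ω, max (y - X ω) 0 ∂μ
      = lam * ∫ ω in A, X ω ∂μ := by
    rw [hint1, hint2]
    have hl : lam ≠ 0 := ne_of_gt hlam
    field_simp
    ring
  exact hgoal
end

section
/- (RUP profit positivity) Suppose F is continuous and strictly increasing on [0, X̄] with F(0) = 0 and F(X̄) = 1. Then for any price π with 0 < π ≤ λ, the supplier's expected profit at the commitment y*(π) is strictly positive: π·y*(π) − λ·E[(y*(π) − X)⁺] > 0. -/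
open MeasureTheory Set

/-- RUP profit positivity: if `F` is continuous and strictly increasing on `[0, X̄]` with
`F(0) = 0` and `F(X̄) = 1`, then for any price `π` with `0 < π ≤ λ` the supplier's expected
profit at the commitment `y*(π)` is strictly positive. -/
theorem rup_profit_positive
    {Ω : Type*} [MeasurableSpace Ω] (μ : Measure Ω) [IsProbabilityMeasure μ]
    (X : Ω → ℝ) (hX : Measurable X) (hXnn : ∀ ω, 0 ≤ X ω)
    (Xbar : ℝ) (hXbar : 0 < Xbar) (hsupp : μ {ω | X ω ≤ Xbar} = 1)
    (hFc : Continuous (cdfOf μ X)) (hF0 : cdfOf μ X 0 = 0) (hF1 : cdfOf μ X Xbar = 1)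
    (hFstrict : StrictMonoOn (cdfOf μ X) (Set.Icc (0:ℝ) Xbar))
    (lam : ℝ) (hlam : 0 < lam) (pr : ℝ) (hpr0 : 0 < pr) (hprl : pr ≤ lam) :
    0 < pr * ystar (cdfOf μ X) lam pr
        - lam * ∫ ω, max (ystar (cdfOf μ X) lam pr - X ω) 0 ∂μ := by
  set F := cdfOf μ X with hF
  have hmono : Monotone F := by
    intro a b hab
    exact ENNReal.toReal_mono (measure_ne_top μ _)
      (measure_mono (fun ω hω => le_trans hω hab))
  set u : ℝ := pr / lam with hu
  have hu0 : 0 < u := div_pos hpr0 hlam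
  have hu1 : u ≤ 1 := (div_le_one hlam).mpr hprl
  -- find y with F y = u
  have hIVT := intermediate_value_Icc hXbar.le hFc.continuousOn
  have hyex : u ∈ F '' Icc 0 Xbar := hIVT (by rw [hF0, hF1]; exact ⟨hu0.le, hu1⟩)
  obtain ⟨y, hyIcc, hFy⟩ := hyex
  have hyex2 : u / 2 ∈ F '' Icc 0 Xbar := hIVT (by rw [hF0, hF1]; constructor <;> linarith)
  obtain ⟨ε, hεIcc, hFε⟩ := hyex2
  have hy0 : 0 < y := by
    rcases lt_or_eq_of_le hyIcc.1 with h | h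
    · exact h
    · exfalso; rw [← h, hF0] at hFy; linarith
  have hε0 : 0 < ε := by
    rcases lt_or_eq_of_le hεIcc.1 with h | h
    · exact h
    · exfalso; rw [← h, hF0] at hFε; linarith
  have hεy : ε < y := by
    by_contra h
    push_neg at h
    have := hmono h
    rw [hFy, hFε] at this
    linarith
  -- identify ystar with y
  have hystar : ystar F lam pr = y := by
    rw [ystar, geninv, min_eq_left hu1]
    have hyS : y ∈ {t : ℝ | 0 ≤ t ∧ u ≤ F t} := ⟨hyIcc.1, hFy.ge⟩
    apply le_antisymm
    · exact csInf_le ⟨0, fun s hs => hs.1⟩ hyS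
    · apply le_csInf ⟨y, hyS⟩
      intro s hs
      by_contra h
      push_neg at h
      have hsIcc : s ∈ Icc (0:ℝ) Xbar := ⟨hs.1, le_trans h.le hyIcc.2⟩
      have := hFstrict hsIcc hyIcc h
      rw [hFy] at this
      exact absurd hs.2 (by linarith)
  rw [hystar]
  -- measurable sets
  set A : Set Ω := X ⁻¹' Iic ε with hAdef
  set B : Set Ω := X ⁻¹' Ioc ε y with hBdef
  have hA : MeasurableSet A := hX measurableSet_Iic
  have hB : MeasurableSet B := hX measurableSet_Ioc
  have hμA : (μ A).toReal = F ε := by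
    rw [hF, cdfOf]; rfl
  have hμABy : μ A + μ B = μ {ω | X ω ≤ y} := by
    rw [hAdef, hBdef, ← measure_union (Disjoint.preimage X (Iic_disjoint_Ioc le_rfl)) hB,
      ← preimage_union, Iic_union_Ioc_eq_Iic hεy.le]
    rfl
  have hμB : (μ B).toReal = F y - F ε := by
    have h := congrArg ENNReal.toReal hμABy
    rw [ENNReal.toReal_add (measure_ne_top μ _) (measure_ne_top μ _)] at h
    have : (μ {ω | X ω ≤ y}).toReal = F y := rfl
    rw [this] at h
    linarith [hμA, h]
  -- the dominating simple function
  set g : Ω → ℝ := fun ω => A.indicator (fun _ => y) ω + B.indicator (fun _ => y - ε) ω with hg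
  have hgle : ∀ ω, max (y - X ω) 0 ≤ g ω := by
    intro ω
    have hXω := hXnn ω
    show max (y - X ω) 0 ≤ A.indicator (fun _ => y) ω + B.indicator (fun _ => y - ε) ω
    by_cases h1 : ω ∈ A
    · have h1' : X ω ≤ ε := h1
      have h2 : ω ∉ B := fun hb => absurd (hb : ε < X ω ∧ X ω ≤ y).1 (not_lt.mpr h1')
      rw [Set.indicator_of_mem h1, Set.indicator_of_notMem h2, add_zero]
      exact max_le (by linarith) (by linarith)
    · have h1' : ε < X ω := lt_of_not_ge h1
      rw [Set.indicator_of_notMem h1, zero_add]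
      by_cases h2 : ω ∈ B
      · have h2' : ε < X ω ∧ X ω ≤ y := h2
        rw [Set.indicator_of_mem h2]
        exact max_le (by linarith) (by linarith)
      · have h2' : y < X ω := by
          by_contra h
          push_neg at h
          exact h2 (show ε < X ω ∧ X ω ≤ y from ⟨h1', h⟩)
        rw [Set.indicator_of_notMem h2]
        exact max_le (by linarith) le_rfl
  -- integrability
  have hintg : Integrable g μ :=
    ((integrable_const y).indicator hA).add ((integrable_const (y - ε)).indicator hB)
  have hintmax : Integrable (fun ω => max (y - X ω) 0) μ := by
    apply Integrable.mono' (integrable_const y)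
    · exact ((measurable_const.sub hX).max measurable_const).aestronglyMeasurable
    · filter_upwards with ω
      rw [Real.norm_eq_abs, abs_of_nonneg (le_max_right _ _)]
      exact max_le (by linarith [hXnn ω]) (by linarith)
  have hintle : ∫ ω, max (y - X ω) 0 ∂μ ≤ ∫ ω, g ω ∂μ :=
    integral_mono hintmax hintg hgle
  have hgint : ∫ ω, g ω ∂μ = F ε * y + (F y - F ε) * (y - ε) := by
    rw [hg, integral_add ((integrable_const y).indicator hA)
        ((integrable_const (y - ε)).indicator hB),
      integral_indicator_const _ hA, integral_indicator_const _ hB, measureReal_def, measureReal_def, hμA, hμB,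
      smul_eq_mul, smul_eq_mul]
  have hkey : ∫ ω, max (y - X ω) 0 ∂μ ≤ u * y - ε * (u / 2) := by
    rw [hgint, hFy, hFε] at hintle
    calc ∫ ω, max (y - X ω) 0 ∂μ ≤ u / 2 * y + (u - u / 2) * (y - ε) := hintle
      _ = u * y - ε * (u / 2) := by ring
  have hlampr : lam * u = pr := by
    rw [hu]; field_simp
  nlinarith [mul_le_mul_of_nonneg_left hkey hlam.le, mul_pos hε0 (by linarith : (0:ℝ) < u / 2),
    mul_pos hlam (mul_pos hε0 (by linarith : (0:ℝ) < u / 2))]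
end
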